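/- For Hankel-type determinants built from c : ℕ → ℝ, the identity F^1_n H^0_n − F^0_n H^1_n = G^1_{n-1} H^0_{n+1} holds for all n ≥ 3. -/

import Mathlib

/-- Hankel determinant `H^m_n = det(c_{i+j+m})`. -/
noncomputable def Hk (c : ℕ → ℝ) (m n : ℕ) : ℝ :=
  (Matrix.of fun i j : Fin n => c (i.val + j.val + m)).det

/-- `G^m_n`: the Hankel determinant `H^m_n` with its last row
`(c_{m+n-1},…,c_{m+2n-2})` replaced by `(c_{m+n},…,c_{m+2n-1})`;
by convention `G^m_0 = 0`. -/
noncomputable def Gk (c : ℕ → ℝ) (m n : ℕ) : ℝ :=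
  if n = 0 then 0 else
  (Matrix.of fun i j : Fin n =>
    if i.val = n - 1 then c (m + n + j.val) else c (i.val + j.val + m)).det

/-- `E^m_n`: determinant of the `n×n` matrix with rows
`(c_{m+k},…,c_{m+k+n-2}, c_{m+k+n+1})`, i.e. the last column advanced by 2. -/
noncomputable def Ek (c : ℕ → ℝ) (m n : ℕ) : ℝ :=
  (Matrix.of fun i j : Fin n =>
    if j.val = n - 1 then c (m + i.val + n + 1) else c (m + i.val + j.val)).det

/-- `F^m_n`: determinant of the `n×n` matrix with rows
`(c_{m+k},…,c_{m+k+n-3}, c_{m+k+n-1}, c_{m+k+n})`, i.e. column `n−2` skipped;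
by convention `F^m_1 = 0`. -/
noncomputable def Fk (c : ℕ → ℝ) (m n : ℕ) : ℝ :=
  if n = 1 then 0 else
  (Matrix.of fun i j : Fin n =>
    if n - 2 ≤ j.val then c (m + i.val + j.val + 1) else c (m + i.val + j.val)).det

/-- `S^m_n`: determinant of `(c_{m+σ(i)+σ(j)})` where `σ(i) = i` for `i ≤ n−2`
and `σ(n−1) = n`. -/
noncomputable def Sk (c : ℕ → ℝ) (m n : ℕ) : ℝ :=
  (Matrix.of fun i j : Fin n =>
    c (m + (if i.val = n - 1 then n else i.val) +
        (if j.val = n - 1 then n else j.val))).det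

section FDiffAux

open Matrix

variable {R : Type*} [CommRing R] {S : Type*} [CommRing S] {m : Type*} [DecidableEq m] [Fintype m]

noncomputable def Hk' (c : ℕ → R) (m n : ℕ) : R :=
  (Matrix.of fun i j : Fin n => c (i.val + j.val + m)).det

noncomputable def Gk' (c : ℕ → R) (m n : ℕ) : R :=
  if n = 0 then 0 else
  (Matrix.of fun i j : Fin n =>
    if i.val = n - 1 then c (m + n + j.val) else c (i.val + j.val + m)).det

noncomputable def Fk' (c : ℕ → R) (m n : ℕ) : R :=
  if n = 1 then 0 else
  (Matrix.of fun i j : Fin n =>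
    if n - 2 ≤ j.val then c (m + i.val + j.val + 1) else c (m + i.val + j.val)).det

lemma map_Hk' (f : R →+* S) (d : ℕ → R) (m n : ℕ) :
    f (Hk' d m n) = Hk' (fun k => f (d k)) m n := by
  rw [Hk', Hk', RingHom.map_det]; rfl

lemma map_Gk' (f : R →+* S) (d : ℕ → R) (m n : ℕ) :
    f (Gk' d m n) = Gk' (fun k => f (d k)) m n := by
  rw [Gk', Gk']
  split
  · simp
  · rw [RingHom.map_det]
    congr 1
    ext i j
    simp only [RingHom.mapMatrix_apply, Matrix.map_apply, Matrix.of_apply, apply_ite f]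

lemma map_Fk' (f : R →+* S) (d : ℕ → R) (m n : ℕ) :
    f (Fk' d m n) = Fk' (fun k => f (d k)) m n := by
  rw [Fk', Fk']
  split
  · simp
  · rw [RingHom.map_det]
    congr 1
    ext i j
    simp only [RingHom.mapMatrix_apply, Matrix.map_apply, Matrix.of_apply, apply_ite f]


lemma val_succAbove {n : ℕ} (p : Fin (n+1)) (i : Fin n) :
    (p.succAbove i).val = if i.val < p.val then i.val else i.val + 1 := by
  rcases lt_or_ge (Fin.castSucc i) p with h | h
  · rw [Fin.succAbove_of_castSucc_lt _ _ h, Fin.coe_castSucc, if_pos (by exact h)]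
  · rw [Fin.succAbove_of_le_castSucc _ _ h, Fin.val_succ, if_neg (by simpa [Fin.le_def, Nat.not_lt] using h)]

lemma det_updateRow_single {n : ℕ} (A : Matrix (Fin (n+1)) (Fin (n+1)) R) (r i : Fin (n+1)) :
    (A.updateRow r (Pi.single i 1)).det
      = (-1) ^ (r.val + i.val) * (A.submatrix r.succAbove i.succAbove).det := by
  rw [Matrix.det_succ_row _ r, Finset.sum_eq_single i]
  · rw [Matrix.updateRow_self, Matrix.submatrix_updateRow_succAbove]
    simp
  · intro b _ hb
    rw [Matrix.updateRow_self]
    simp [Pi.single_apply, hb.symm]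
  · simp

lemma det_updateColumn_single {n : ℕ} (A : Matrix (Fin (n+1)) (Fin (n+1)) R) (j r : Fin (n+1)) :
    (A.updateCol j (Pi.single r 1)).det
      = (-1) ^ (r.val + j.val) * (A.submatrix r.succAbove j.succAbove).det := by
  rw [← Matrix.det_transpose, ← Matrix.updateRow_transpose, det_updateRow_single]
  rw [← Matrix.transpose_submatrix, Matrix.det_transpose]
  ring


omit [Fintype m] in
lemma ucc (A : Matrix m m R) {p q : m} (h : p ≠ q) (u v : m → R) :
    (A.updateCol p u).updateCol q v = (A.updateCol q v).updateCol p u := by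
  ext i j
  simp only [Matrix.updateCol_apply]
  split_ifs with h1 h2 <;> simp_all

lemma det_one_updateCol_two (p q : m) (h : p ≠ q) (u v : m → R) :
    (((1 : Matrix m m R).updateCol p u).updateCol q v).det
      = u p * v q - u q * v p := by
  have hzero : ∀ (a b : m → R) (r : m), (r = p ∨ r = q) → a r = 0 → b r = 0 →
      (((1 : Matrix m m R).updateCol p a).updateCol q b).det = 0 := by
    intro a b r hr ha hb
    apply Matrix.det_eq_zero_of_row_eq_zero r
    intro j
    simp only [Matrix.updateCol_apply, Matrix.one_apply]
    split_ifs with h1 h2 h3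
    · exact hb
    · exact ha
    · rcases hr with rfl | rfl
      · exact absurd h3.symm h2
      · exact absurd h3.symm h1
    · rfl
  have hone : (((1 : Matrix m m R).updateCol p (Pi.single p 1)).updateCol q
      (Pi.single q 1)) = 1 := by
    ext i j
    simp only [Matrix.updateCol_apply, Matrix.one_apply, Pi.single_apply]
    split_ifs <;> subst_vars <;> first | rfl | exact absurd rfl ‹_› | tauto
  have hswapdet : (((1 : Matrix m m R).updateCol p (Pi.single q 1)).updateCol q
      (Pi.single p 1)).det = -1 := by
    have hswap : (((1 : Matrix m m R).updateCol p (Pi.single q 1)).updateCol q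
        (Pi.single p 1)) = (1 : Matrix m m R).submatrix id (Equiv.swap p q) := by
      ext i j
      simp only [Matrix.updateCol_apply, Matrix.one_apply, Pi.single_apply,
        Matrix.submatrix_apply, id_eq, Equiv.swap_apply_def]
      split_ifs <;> subst_vars <;> first | rfl | exact absurd rfl ‹_› | tauto
    rw [hswap, Matrix.det_permute', Equiv.Perm.sign_swap h]
    simp
  have z6 : (((1 : Matrix m m R).updateCol p (Pi.single p 1)).updateCol q
      (Pi.single p 1)).det = 0 :=
    Matrix.det_zero_of_column_eq h (by simp [Matrix.updateCol_apply, Ne.symm h])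
  have z7 : (((1 : Matrix m m R).updateCol p (Pi.single q 1)).updateCol q
      (Pi.single q 1)).det = 0 :=
    Matrix.det_zero_of_column_eq h (by simp [Matrix.updateCol_apply, Ne.symm h])
  have hv : v = (fun i => if i = p ∨ i = q then 0 else v i)
      + (v p • (Pi.single p 1 : m → R) + v q • (Pi.single q 1 : m → R)) := by
    funext i
    simp only [Pi.add_apply, Pi.smul_apply, Pi.single_apply, smul_eq_mul]
    split_ifs <;> subst_vars <;> first | ring1 | exact absurd rfl h | tauto
  have hu : u = (fun i => if i = p ∨ i = q then 0 else u i)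
      + (u p • (Pi.single p 1 : m → R) + u q • (Pi.single q 1 : m → R)) := by
    funext i
    simp only [Pi.add_apply, Pi.smul_apply, Pi.single_apply, smul_eq_mul]
    split_ifs <;> subst_vars <;> first | ring1 | exact absurd rfl h | tauto
  set v₀ : m → R := fun i => if i = p ∨ i = q then 0 else v i with hv₀
  set u₀ : m → R := fun i => if i = p ∨ i = q then 0 else u i with hu₀
  have hsplit : ∀ w : m → R,
      (((1 : Matrix m m R).updateCol p w).updateCol q v).det
      = (((1 : Matrix m m R).updateCol p w).updateCol q v₀).det
        + v p * (((1 : Matrix m m R).updateCol p w).updateCol q (Pi.single p 1)).det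
        + v q * (((1 : Matrix m m R).updateCol p w).updateCol q (Pi.single q 1)).det := by
    intro w
    conv_lhs => rw [hv]
    rw [Matrix.det_updateCol_add, Matrix.det_updateCol_add,
      Matrix.det_updateCol_smul, Matrix.det_updateCol_smul]
    ring
  have husplit : ∀ w : m → R,
      (((1 : Matrix m m R).updateCol p u).updateCol q w).det
      = (((1 : Matrix m m R).updateCol p u₀).updateCol q w).det
        + u p * (((1 : Matrix m m R).updateCol p (Pi.single p 1)).updateCol q w).det
        + u q * (((1 : Matrix m m R).updateCol p (Pi.single q 1)).updateCol q w).det := by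
    intro w
    conv_lhs => rw [ucc _ h, hu]
    rw [Matrix.det_updateCol_add, Matrix.det_updateCol_add,
      Matrix.det_updateCol_smul, Matrix.det_updateCol_smul,
      ← ucc _ h, ← ucc _ h, ← ucc _ h]
    ring
  rw [hsplit u, husplit v₀, husplit (Pi.single p 1), husplit (Pi.single q 1)]
  have z1 := hzero u₀ v₀ p (Or.inl rfl) (by simp [hu₀]) (by simp [hv₀])
  have z2 := hzero (Pi.single p 1) v₀ q (Or.inr rfl)
    (by simp [Pi.single_apply, Ne.symm h]) (by simp [hv₀])
  have z3 := hzero (Pi.single q 1) v₀ p (Or.inl rfl)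
    (by simp [Pi.single_apply, h]) (by simp [hv₀])
  have z4 := hzero u₀ (Pi.single p 1) q (Or.inr rfl) (by simp [hu₀])
    (by simp [Pi.single_apply, Ne.symm h])
  have z5 := hzero u₀ (Pi.single q 1) p (Or.inl rfl) (by simp [hu₀])
    (by simp [Pi.single_apply, h])
  rw [z1, z2, z3, z4, z5, z6, z7, hswapdet, hone, Matrix.det_one]
  ring


lemma aux_sub (k : ℕ) (d : ℕ → R) :
    ((Matrix.of (fun i j : Fin (k+4) => d (i.val + j.val + 0))).updateCol ⟨k+1, by omega⟩
        (Pi.single ⟨0, by omega⟩ 1)).submatrix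
        (⟨k+3, by omega⟩ : Fin (k+4)).succAbove (⟨k+3, by omega⟩ : Fin (k+4)).succAbove
      = (((Matrix.of (fun i j : Fin (k+4) => d (i.val + j.val + 0))).submatrix
          (⟨k+3, by omega⟩ : Fin (k+4)).succAbove
          (⟨k+3, by omega⟩ : Fin (k+4)).succAbove).updateCol ⟨k+1, by omega⟩
            (Pi.single (⟨0, by omega⟩ : Fin (k+3)) 1)) := by
  have hj2s : ∀ i : Fin (k+3), ((⟨k+3, by omega⟩ : Fin (k+4)).succAbove i).val = i.val := by
    intro i; rw [val_succAbove, if_pos (by exact i.isLt)]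
  ext i j
  by_cases hx : (j : ℕ) = k+1
  · have e1 : (⟨k+3, by omega⟩ : Fin (k+4)).succAbove j = ⟨k+1, by omega⟩ := by
      apply Fin.ext; rw [hj2s]; exact hx
    have e2 : j = (⟨k+1, by omega⟩ : Fin (k+3)) := Fin.ext hx
    rw [Matrix.submatrix_apply, e1, e2, Matrix.updateCol_self, Matrix.updateCol_self]
    simp only [Pi.single_apply]
    by_cases hy : (i : ℕ) = 0
    · rw [if_pos (Fin.ext (by rw [hj2s]; exact hy)), if_pos (Fin.ext hy)]
    · rw [if_neg (fun h => hy (by rw [← hj2s i]; exact congrArg Fin.val h)),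
        if_neg (fun h => hy (congrArg Fin.val h))]
  · have e1 : (⟨k+3, by omega⟩ : Fin (k+4)).succAbove j ≠ ⟨k+1, by omega⟩ :=
      fun h => hx (by rw [← hj2s j]; exact congrArg Fin.val h)
    have e2 : j ≠ (⟨k+1, by omega⟩ : Fin (k+3)) := fun h => hx (congrArg Fin.val h)
    rw [Matrix.submatrix_apply, Matrix.updateCol_ne e1, Matrix.updateCol_ne e2,
      Matrix.submatrix_apply]

lemma aux_G (k : ℕ) (d : ℕ → R) :
    (((Matrix.of (fun i j : Fin (k+4) => d (i.val + j.val + 0))).submatrix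
          (⟨k+3, by omega⟩ : Fin (k+4)).succAbove
          (⟨k+3, by omega⟩ : Fin (k+4)).succAbove).submatrix
          (⟨0, by omega⟩ : Fin (k+3)).succAbove (⟨k+1, by omega⟩ : Fin (k+3)).succAbove)
        = (Matrix.of fun i j : Fin (k+2) =>
            if i.val = (k+2) - 1 then d (1 + (k+2) + j.val) else d (i.val + j.val + 1))ᵀ := by
  have hj2s : ∀ i : Fin (k+3), ((⟨k+3, by omega⟩ : Fin (k+4)).succAbove i).val = i.val := by
    intro i; rw [val_succAbove, if_pos (by exact i.isLt)]
  ext i j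
  simp only [Matrix.submatrix_apply, Matrix.transpose_apply, Matrix.of_apply]
  rw [hj2s, hj2s, val_succAbove, val_succAbove]
  have := i.isLt
  have := j.isLt
  simp only [show ((⟨0, by omega⟩ : Fin (k+3)) : ℕ) = 0 from rfl,
    show ((⟨k+1, by omega⟩ : Fin (k+3)) : ℕ) = k+1 from rfl]
  split_ifs <;> first | (congr 1; omega) | (exfalso; omega)

set_option maxHeartbeats 2000000 in
lemma key_identity (k : ℕ) (d : ℕ → R) :
    Hk' d 0 (k+4) * (Fk' d 1 (k+3) * Hk' d 0 (k+3) - Fk' d 0 (k+3) * Hk' d 1 (k+3))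
      = Hk' d 0 (k+4) * (Gk' d 1 (k+2) * Hk' d 0 (k+4)) := by
  set M : Matrix (Fin (k+4)) (Fin (k+4)) R :=
    Matrix.of (fun i j : Fin (k+4) => d (i.val + j.val + 0)) with hMdef
  have hM : Hk' d 0 (k+4) = M.det := rfl
  set j1 : Fin (k+4) := ⟨k+1, by omega⟩ with hj1def
  set j2 : Fin (k+4) := ⟨k+3, by omega⟩ with hj2def
  set r1 : Fin (k+4) := ⟨0, by omega⟩ with hr1def
  have hj : j1 ≠ j2 := by simp [hj1def, hj2def, Fin.ext_iff]
  have hr1s : ∀ i : Fin (k+3), (r1.succAbove i).val = i.val + 1 := by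
    intro i; rw [val_succAbove]; simp [hr1def]
  have hj2s : ∀ i : Fin (k+3), (j2.succAbove i).val = i.val := by
    intro i; rw [val_succAbove, if_pos (by exact i.isLt)]
  have hj1s : ∀ i : Fin (k+3), (j1.succAbove i).val
      = if i.val < k+1 then i.val else i.val + 1 := by
    intro i; rw [val_succAbove]
  have adj_eq : ∀ i j : Fin (k+4), adjugate M i j
      = (-1 : R)^(i.val+j.val) * (M.submatrix j.succAbove i.succAbove).det := by
    intro i j
    rw [Matrix.adjugate_apply, det_updateRow_single, Nat.add_comm j.val i.val]
  have m1 : M.submatrix r1.succAbove j1.succAbove = Matrix.of (fun i j : Fin (k+3) =>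
      if (k+3) - 2 ≤ j.val then d (1 + i.val + j.val + 1) else d (1 + i.val + j.val)) := by
    ext i j
    simp only [Matrix.submatrix_apply, Matrix.of_apply, hMdef]
    rw [hr1s, hj1s]
    have := j.isLt
    split_ifs <;> first | (congr 1; omega) | (exfalso; omega)
  have a1 : adjugate M j1 r1 = (-1 : R)^(k+1) * Fk' d 1 (k+3) := by
    rw [adj_eq, m1, Fk', if_neg (by omega)]
    norm_num
    rfl
  have m2 : M.submatrix j2.succAbove j2.succAbove
      = Matrix.of (fun i j : Fin (k+3) => d (i.val + j.val + 0)) := by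
    ext i j
    simp only [Matrix.submatrix_apply, Matrix.of_apply, hMdef]
    rw [hj2s, hj2s]
  have a2 : adjugate M j2 j2 = Hk' d 0 (k+3) := by
    rw [adj_eq, m2, Hk']
    have he : (-1 : R)^((j2:ℕ) + (j2:ℕ)) = 1 := Even.neg_one_pow ⟨(j2:ℕ), by ring⟩
    rw [he, one_mul]
  have m3 : M.submatrix r1.succAbove j2.succAbove
      = Matrix.of (fun i j : Fin (k+3) => d (i.val + j.val + 1)) := by
    ext i j
    simp only [Matrix.submatrix_apply, Matrix.of_apply, hMdef]
    rw [hr1s, hj2s]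
    congr 1
    omega
  have a3 : adjugate M j2 r1 = (-1 : R)^(k+3) * Hk' d 1 (k+3) := by
    rw [adj_eq, m3, Hk']
    norm_num
    rfl
  have m4 : M.submatrix j2.succAbove j1.succAbove = Matrix.of (fun i j : Fin (k+3) =>
      if (k+3) - 2 ≤ j.val then d (0 + i.val + j.val + 1) else d (0 + i.val + j.val)) := by
    ext i j
    simp only [Matrix.submatrix_apply, Matrix.of_apply, hMdef]
    rw [hj2s, hj1s]
    have := j.isLt
    split_ifs <;> first | (congr 1; omega) | (exfalso; omega)
  have a4 : adjugate M j1 j2 = Fk' d 0 (k+3) := by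
    rw [adj_eq, m4, Fk', if_neg (by omega)]
    have he : (-1 : R)^((j1:ℕ) + (j2:ℕ)) = 1 := Even.neg_one_pow ⟨k+2, by show k+1+(k+3) = k+2+(k+2); omega⟩
    rw [he, one_mul]
  -- the auxiliary matrix E
  set E : Matrix (Fin (k+4)) (Fin (k+4)) R :=
    ((1 : Matrix (Fin (k+4)) (Fin (k+4)) R).updateCol j1
      (fun i => adjugate M i r1)).updateCol j2 (fun i => adjugate M i j2) with hEdef
  have hdetE : E.det = adjugate M j1 r1 * adjugate M j2 j2
      - adjugate M j2 r1 * adjugate M j1 j2 :=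
    det_one_updateCol_two j1 j2 hj _ _
  -- M * E
  have hMA := Matrix.mul_adjugate M
  have hME : M * E = (M.updateCol j1
        (M.det • (Pi.single r1 1 : Fin (k+4) → R))).updateCol j2
        (M.det • (Pi.single j2 1 : Fin (k+4) → R)) := by
    ext i j
    rw [Matrix.mul_apply]
    by_cases ha : j = j2
    · subst ha
      have h5 := congrFun (congrFun hMA i) j2
      rw [Matrix.mul_apply] at h5
      simp only [hEdef, Matrix.updateCol_self]
      rw [h5]
      simp [Matrix.one_apply, Pi.single_apply]
    · by_cases hb : j = j1
      · subst hb
        have h5 := congrFun (congrFun hMA i) r1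
        rw [Matrix.mul_apply] at h5
        simp only [hEdef, Matrix.updateCol_ne ha, Matrix.updateCol_self]
        rw [h5]
        simp [Matrix.one_apply, Pi.single_apply]
      · simp only [hEdef, Matrix.updateCol_ne ha, Matrix.updateCol_ne hb]
        simp [Matrix.one_apply, mul_ite, Finset.sum_ite_eq']
  set K : Matrix (Fin (k+4)) (Fin (k+4)) R :=
    (M.updateCol j1 (Pi.single r1 1)).updateCol j2 (Pi.single j2 1) with hKdef
  have hsm : ((M.updateCol j1
        (M.det • (Pi.single r1 1 : Fin (k+4) → R))).updateCol j2
        (M.det • (Pi.single j2 1 : Fin (k+4) → R))).det = M.det * (M.det * K.det) := by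
    rw [Matrix.det_updateCol_smul, ucc M hj, Matrix.det_updateCol_smul, ← ucc M hj]
  -- compute K.det
  have hK : K.det = (-1 : R)^(k+1) * Gk' d 1 (k+2) := by
    rw [hKdef, hMdef, hj1def, hj2def, hr1def]
    rw [det_updateColumn_single, aux_sub, det_updateColumn_single, aux_G,
      Matrix.det_transpose, Gk', if_neg (by omega)]
    have h1 : (-1 : R)^(((⟨k+3, by omega⟩ : Fin (k+4)) : ℕ)
        + ((⟨k+3, by omega⟩ : Fin (k+4)) : ℕ)) = 1 := Even.neg_one_pow ⟨k+3, rfl⟩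
    have h2 : (-1 : R)^(((⟨0, by omega⟩ : Fin (k+3)) : ℕ)
        + ((⟨k+1, by omega⟩ : Fin (k+3)) : ℕ)) = (-1 : R)^(k+1) := by norm_num
    rw [h1, h2, one_mul]
  -- assemble
  have hdetME : (M * E).det = M.det * E.det := Matrix.det_mul M E
  rw [hME, hsm] at hdetME
  rw [hdetE, a1, a2, a3, a4, hK] at hdetME
  have hpow : (-1 : R)^(k+3) = (-1 : R)^(k+1) := by
    have h6 : (-1 : R)^(k+3) = (-1:R)^(k+1) * (-1:R)^2 := by rw [← pow_add]
    simp [h6]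
  rw [hpow] at hdetME
  have hs : (-1 : R)^(k+1) * (-1 : R)^(k+1) = 1 := by
    rw [← pow_add]
    exact Even.neg_one_pow ⟨k+1, by ring⟩
  rw [hM]
  linear_combination (-((-1:R)^(k+1))) * hdetME
    + (M.det * (M.det * Gk' d 1 (k+2)) - M.det * (Fk' d 1 (k+3) * Hk' d 0 (k+3) - Fk' d 0 (k+3) * Hk' d 1 (k+3))) * hs
lemma Hk_eq : @Hk = @Hk' ℝ _ := rfl
lemma Gk_eq : @Gk = @Gk' ℝ _ := rfl
lemma Fk_eq : @Fk = @Fk' ℝ _ := rfl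

lemma detB_ne_zero (N : ℕ) :
    Hk' (fun m => ∑ t : Fin N, ((t : ℕ) : ℝ)^m) 0 N ≠ 0 := by
  set v : Fin N → ℝ := fun t => ((t : ℕ) : ℝ) with hv
  have hB : Matrix.of (fun i j : Fin N =>
        (fun m => ∑ t : Fin N, ((t : ℕ) : ℝ)^m) (i.val + j.val + 0))
      = (Matrix.vandermonde v)ᵀ * (Matrix.vandermonde v) := by
    ext i j
    simp [Matrix.mul_apply, Matrix.vandermonde, hv, pow_add]
  rw [Hk', hB, Matrix.det_mul, Matrix.det_transpose, Matrix.det_vandermonde]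
  have h : ∀ i j : Fin N, i < j → v j - v i ≠ 0 := by
    intro i j hij
    rw [sub_ne_zero, hv]
    intro hh
    have := Nat.cast_inj.mp hh
    have := Fin.lt_iff_val_lt_val.mp hij
    omega
  apply mul_ne_zero <;>
    (apply Finset.prod_ne_zero_iff.mpr; intro i _;
     apply Finset.prod_ne_zero_iff.mpr; intro j hj;
     exact h i j (Finset.mem_Ioi.mp hj))

end FDiffAux

/-- `F¹_n H⁰_n − F⁰_n H¹_n = G¹_{n-1} H⁰_{n+1}` for `n ≥ 3`. -/
theorem F_difference_identity (c : ℕ → ℝ) (n : ℕ) (hn : 3 ≤ n) :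
    Fk c 1 n * Hk c 0 n - Fk c 0 n * Hk c 1 n = Gk c 1 (n - 1) * Hk c 0 (n + 1) := by
  obtain ⟨k, rfl⟩ : ∃ k, n = k + 3 := ⟨n - 3, by omega⟩
  set b : ℕ → ℝ := fun m => ∑ t : Fin (k+4), ((t : ℕ) : ℝ)^m with hb
  set P : ℕ → Polynomial ℝ :=
    fun m => Polynomial.C (c m) + Polynomial.X * Polynomial.C (b m) with hP
  set Q : ℕ → Polynomial ℝ :=
    fun m => Polynomial.C (b m) + Polynomial.X * Polynomial.C (c m) with hQ
  -- p ≠ 0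
  have hp : Hk' P 0 (k+4) ≠ 0 := by
    intro h0
    have hq : Hk' Q 0 (k+4) = 0 := by
      apply Polynomial.eq_zero_of_infinite_isRoot
      apply Set.Infinite.mono (s := ({(0:ℝ)}ᶜ : Set ℝ))
      · intro x hx
        have hx0 : x ≠ 0 := hx
        show Polynomial.IsRoot _ x
        unfold Polynomial.IsRoot
        rw [← Polynomial.coe_evalRingHom, map_Hk']
        have e1 : (fun m => (Polynomial.evalRingHom x) (Q m)) = fun m => b m + x * c m := by
          funext m
          rw [hQ]
          simp only [Polynomial.coe_evalRingHom, Polynomial.eval_add, Polynomial.eval_mul,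
            Polynomial.eval_C, Polynomial.eval_X, zero_mul, add_zero, mul_zero]
        rw [e1]
        have e2 : Hk' (fun m => b m + x * c m) 0 (k+4)
            = x^(k+4) * Hk' (fun m => c m + x⁻¹ * b m) 0 (k+4) := by
          rw [Hk', Hk']
          have hds := Matrix.det_smul
            (Matrix.of fun i j : Fin (k+4) => c (i.val + j.val + 0) + x⁻¹ * b (i.val + j.val + 0)) x
          rw [Fintype.card_fin] at hds
          rw [← hds]
          congr 1
          ext i j
          simp only [Matrix.smul_apply, Matrix.of_apply, smul_eq_mul]
          field_simp
          try ring
        have e3 : Hk' (fun m => c m + x⁻¹ * b m) 0 (k+4) = 0 := by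
          have h7 := map_Hk' (Polynomial.evalRingHom x⁻¹) P 0 (k+4)
          rw [h0, map_zero] at h7
          have e6 : (fun m => (Polynomial.evalRingHom x⁻¹) (P m))
              = fun m => c m + x⁻¹ * b m := by
            funext m
            rw [hP]
            simp only [Polynomial.coe_evalRingHom, Polynomial.eval_add, Polynomial.eval_mul,
            Polynomial.eval_C, Polynomial.eval_X, zero_mul, add_zero, mul_zero]
          rw [e6] at h7
          exact h7.symm
        rw [e2, e3, mul_zero]
      · exact (Set.finite_singleton (0:ℝ)).infinite_compl
    have h5 := map_Hk' (Polynomial.evalRingHom 0) Q 0 (k+4)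
    rw [hq, map_zero] at h5
    have e4 : (fun m => (Polynomial.evalRingHom 0) (Q m)) = b := by
      funext m
      rw [hQ]
      simp only [Polynomial.coe_evalRingHom, Polynomial.eval_add, Polynomial.eval_mul,
            Polynomial.eval_C, Polynomial.eval_X, zero_mul, add_zero, mul_zero]
    rw [e4] at h5
    exact detB_ne_zero (k+4) h5.symm
  have hkey := key_identity k P
  have hcancel := mul_left_cancel₀ hp hkey
  have h6 := congrArg (Polynomial.evalRingHom 0) hcancel
  have e5 : (fun m => (Polynomial.evalRingHom 0) (P m)) = c := by
    funext m
    rw [hP]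
    simp only [Polynomial.coe_evalRingHom, Polynomial.eval_add, Polynomial.eval_mul,
            Polynomial.eval_C, Polynomial.eval_X, zero_mul, add_zero, mul_zero]
  simp only [map_sub, _root_.map_mul, map_Hk', map_Fk', map_Gk', e5] at h6
  rw [Hk_eq, Fk_eq, Gk_eq, show k+3-1 = k+2 from by omega, show k+3+1 = k+4 from by omega]
  exact h6
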